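/- arXiv:2502.16619 — 3 statements merged into one kernel-verified Lean document; each statement's English description precedes it below -/
import Mathlib

section
/- Let t be a monoidal t-structure on a monoidal triangulated category T with 0 ∈ dev(t). Then T is tensor reduced (as a monoidal additive category) if and only if t is tensor reduced (i.e. its heart is tensor reduced). Consequently, if T admits one tensor reduced monoidal t-structure, then every monoidal t-structure on T with 0 in its deviation is tensor reduced. -/
open CategoryTheory Category Limits Pretriangulated Triangulated MonoidalCategory

namespace Paper

variable (C : Type*) [Category C] [Preadditive C] [HasZeroObject C] [HasShift C ℤ]
  [∀ n : ℤ, (shiftFunctor C n).Additive] [Pretriangulated C]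

/-- Truncation and cohomology data for a t-structure `t`: the truncation functors
`τ^{≤ n}`, `τ^{≥ n}` together with the natural maps `τ^{≤ n} X ⟶ X ⟶ τ^{≥ n+1} X`
and the connecting maps forming distinguished truncation triangles. -/
structure TruncData (t : TStructure C) where
  τle : ℤ → C ⥤ C
  τge : ℤ → C ⥤ C
  τle_mem (n : ℤ) (X : C) : t.le n ((τle n).obj X)
  τge_mem (n : ℤ) (X : C) : t.ge n ((τge n).obj X)
  ι (n : ℤ) : τle n ⟶ 𝟭 C
  π (n : ℤ) : 𝟭 C ⟶ τge n
  δ (n : ℤ) (X : C) : (τge (n + 1)).obj X ⟶ ((τle n).obj X)⟦(1 : ℤ)⟧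
  triangle_mem (n : ℤ) (X : C) :
    Triangle.mk ((ι n).app X) ((π (n + 1)).app X) (δ n X) ∈ distTriang C

variable {C}

/-- The cohomological functor `H^n_t := Σ^n ∘ τ^{≤ n} ∘ τ^{≥ n}`, valued in the heart. -/
def TruncData.H {t : TStructure C} (d : TruncData C t) (n : ℤ) : C ⥤ C :=
  d.τge n ⋙ d.τle n ⋙ shiftFunctor C n

/-- The heart `D^{≤ 0} ∩ D^{≥ 0}` of a t-structure. -/
def Heart (t : TStructure C) (X : C) : Prop := t.le 0 X ∧ t.ge 0 X

/-- A t-structure is bounded if every object lies in some `D^{≤ b} ∩ D^{≥ a}`. -/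
def IsBounded (t : TStructure C) : Prop := ∀ X : C, ∃ a b : ℤ, t.le b X ∧ t.ge a X


section Monoidal

variable (C) [MonoidalCategory C]

/-- A monoidal triangulated category: the tensor product is exact in each variable,
with compatibility isomorphisms `Σ(X) ⊗ Y ≅ Σ(X ⊗ Y)` and `X ⊗ Σ(Y) ≅ Σ(X ⊗ Y)`. -/
class MonoidalTriangulated where
  shiftTensor (n : ℤ) (X Y : C) : ((X⟦n⟧) ⊗ Y) ≅ ((X ⊗ Y)⟦n⟧)
  tensorShift (n : ℤ) (X Y : C) : (X ⊗ (Y⟦n⟧)) ≅ ((X ⊗ Y)⟦n⟧)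
  whiskerLeft_distinguished (X : C) (T : Triangle C) (hT : T ∈ distTriang C) :
    Triangle.mk (X ◁ T.mor₁) (X ◁ T.mor₂)
      ((X ◁ T.mor₃) ≫ (tensorShift 1 X T.obj₁).hom) ∈ distTriang C
  whiskerRight_distinguished (Y : C) (T : Triangle C) (hT : T ∈ distTriang C) :
    Triangle.mk (T.mor₁ ▷ Y) (T.mor₂ ▷ Y)
      ((T.mor₃ ▷ Y) ≫ (shiftTensor 1 T.obj₁ Y).hom) ∈ distTriang C

/-- The deviation of the `k`-shifted t-structure `Σ^{-k} t = (D^{≤ k}, D^{≥ k+1})`: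
the set of integers `n` with `D^{≤ k} ⊗ D^{≤ k+n} ⊆ D^{≤ k}` and
`D^{≥ k} ⊗ D^{≥ k+n} ⊆ D^{≥ k}`.  The deviation of `t` itself is `dev C t 0`. -/
def dev (t : TStructure C) (k : ℤ) : Set ℤ :=
  {n | (∀ X Y : C, t.le k X → t.le (k + n) Y → t.le k (X ⊗ Y)) ∧
       (∀ X Y : C, t.ge k X → t.ge (k + n) Y → t.ge k (X ⊗ Y))}

variable {C}

/-- The Künneth formula: `H^n(X ⊗ Y)` is the (bi)product `⊕_{p+q=n} H^p(X) ⊗ H^q(Y)`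
(all but finitely many summands are zero, so the product is the coproduct). -/
def Kunneth {t : TStructure C} (d : TruncData C t) : Prop :=
  ∀ (n : ℤ) (X Y : C),
    ∃ p : ∀ q : ℤ, ((d.H n).obj (X ⊗ Y)) ⟶ (((d.H q).obj X) ⊗ ((d.H (n - q)).obj Y)),
      Nonempty (IsLimit (Fan.mk ((d.H n).obj (X ⊗ Y)) p))

variable (C) in
/-- A monoidal additive category is tensor reduced if `X ⊗ X = 0` implies `X = 0`. -/
def TensorReducedCat : Prop := ∀ X : C, IsZero (X ⊗ X) → IsZero X

/-- A monoidal t-structure is tensor reduced if its heart is: for `X` in the heart,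
`X ⊗ X = 0` implies `X = 0`. -/
def TensorReduced (t : TStructure C) : Prop :=
  ∀ X : C, Heart t X → IsZero (X ⊗ X) → IsZero X

end Monoidal


section Aux

variable {t : TStructure C}

lemma zero_hom {X Y : C} {a b : ℤ} (hX : t.le a X) (hY : t.ge b Y) (hab : a < b) (f : X ⟶ Y) :
    f = 0 := by
  have h1 : t.le 0 (X⟦a⟧) := t.le_shift a a 0 (by omega) X hX
  have h2 : t.ge 1 (Y⟦a⟧) :=
    t.ge_antitone (show (1 : ℤ) ≤ b - a by omega) _ (t.ge_shift b a (b - a) (by omega) Y hY)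
  have h3 := t.zero' ((shiftFunctor C a).map f) h1 h2
  apply (shiftFunctor C a).map_injective
  rw [h3, Functor.map_zero]

lemma isZero_shift_iff (X : C) (n : ℤ) : IsZero (X⟦n⟧) ↔ IsZero X := by
  constructor
  · intro h
    exact IsZero.of_iso ((shiftFunctor C (-n)).map_isZero h)
      ((shiftFunctorCompIsoId C n (-n) (by omega)).symm.app X)
  · intro h
    exact (shiftFunctor C n).map_isZero h

lemma isZero_τge_aux (d : TruncData C t) (X : C) (n : ℤ) (hπ : (d.π (n + 1)).app X = 0) :
    IsZero ((d.τge (n + 1)).obj X) := by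
  have hT := d.triangle_mem n X
  rw [IsZero.iff_id_eq_zero]
  obtain ⟨g, hg⟩ := Triangle.yoneda_exact₃ _ hT (𝟙 _) (by simp [hπ]; exact zero_comp)
  dsimp at hg
  refine hg.trans ?_
  rw [zero_hom (t.le_shift n 1 (n - 1) (by omega) _ (d.τle_mem n X))
    (d.τge_mem (n + 1) X) (by omega) g]
  exact comp_zero

lemma isZero_τle_aux (d : TruncData C t) (X : C) (n : ℤ) (hι : (d.ι n).app X = 0) :
    IsZero ((d.τle n).obj X) := by
  have hT := d.triangle_mem n X
  rw [← isZero_shift_iff _ (1 : ℤ), IsZero.iff_id_eq_zero]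
  obtain ⟨g, hg⟩ := Triangle.coyoneda_exact₁ _ hT (𝟙 _) (by simp [hι]; exact Functor.map_zero _ _ _)
  dsimp at hg
  refine hg.trans ?_
  rw [zero_hom (t.le_shift n 1 (n - 1) (by omega) _ (d.τle_mem n X))
    (d.τge_mem (n + 1) X) (by omega) g]
  exact zero_comp

lemma isZero_τge_of_le (d : TruncData C t) {X : C} {m n : ℤ} (hX : t.le m X) (h : m ≤ n) :
    IsZero ((d.τge (n + 1)).obj X) :=
  isZero_τge_aux d X n (zero_hom hX (d.τge_mem _ _) (by omega) _)

lemma isZero_τge_of_isZero (d : TruncData C t) {X : C} (hX : IsZero X) (n : ℤ) :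
    IsZero ((d.τge (n + 1)).obj X) :=
  isZero_τge_aux d X n (hX.eq_of_src _ 0)

lemma isZero_τle_of_isZero (d : TruncData C t) {X : C} (hX : IsZero X) (n : ℤ) :
    IsZero ((d.τle n).obj X) :=
  isZero_τle_aux d X n (hX.eq_of_tgt _ 0)

lemma isZero_H_of_isZero (d : TruncData C t) {X : C} (hX : IsZero X) (n : ℤ) :
    IsZero ((d.H n).obj X) := by
  obtain ⟨m, rfl⟩ : ∃ m, n = m + 1 := ⟨n - 1, by omega⟩
  exact (shiftFunctor C (m + 1)).map_isZero
    (isZero_τle_of_isZero d (isZero_τge_of_isZero d hX m) _)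

/-- `GE` is stable under fibers: in a distinguished triangle with `obj₂ ≥ n` and
`obj₃ ≥ m > n`, the first object is `≥ n`. -/
lemma ge_obj₁ (d : TruncData C t) {T : Triangle C} (hT : T ∈ distTriang C) {n m : ℤ}
    (h₂ : t.ge n T.obj₂) (h₃ : t.ge m T.obj₃) (hnm : n < m) : t.ge n T.obj₁ := by
  obtain ⟨c, rfl⟩ : ∃ c, n = c + 1 := ⟨n - 1, by omega⟩
  have hι : (d.ι c).app T.obj₁ = 0 := by
    obtain ⟨g, hg⟩ := Triangle.coyoneda_exact₂ _ (inv_rot_of_distTriang _ hT)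
      ((d.ι c).app T.obj₁) (zero_hom (d.τle_mem _ _) h₂ (by omega) _)
    rw [hg, zero_hom (d.τle_mem _ _)
      (t.ge_shift m (-1) (m + 1) (by omega) _ h₃) (by omega) g]
    exact zero_comp
  have hM : IsZero ((d.τle c).obj T.obj₁) := isZero_τle_aux d _ _ hι
  haveI : IsIso ((d.π (c + 1)).app T.obj₁) :=
    (Triangle.isZero₁_iff_isIso₂ _ (d.triangle_mem c T.obj₁)).1 hM
  exact ObjectProperty.prop_of_iso (t.ge (c + 1)) (asIso ((d.π (c + 1)).app T.obj₁)).symm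
    (d.τge_mem (c + 1) T.obj₁)

/-- `LE` is stable under cofibers: in a distinguished triangle with `obj₂ ≤ n` and
`obj₁ ≤ m < n`, the third object is `≤ n`. -/
lemma le_obj₃ (d : TruncData C t) {T : Triangle C} (hT : T ∈ distTriang C) {n m : ℤ}
    (h₂ : t.le n T.obj₂) (h₁ : t.le m T.obj₁) (hmn : m < n) : t.le n T.obj₃ := by
  have hπ : (d.π (n + 1)).app T.obj₃ = 0 := by
    obtain ⟨g, hg⟩ := Triangle.yoneda_exact₃ _ hT ((d.π (n + 1)).app T.obj₃)
      (zero_hom h₂ (d.τge_mem _ _) (by omega) _)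
    rw [hg, zero_hom (t.le_shift m 1 (m - 1) (by omega) _ h₁)
      (d.τge_mem _ _) (by omega) g, comp_zero]
  have hN : IsZero ((d.τge (n + 1)).obj T.obj₃) := isZero_τge_aux d _ _ hπ
  haveI : IsIso ((d.ι n).app T.obj₃) :=
    (Triangle.isZero₃_iff_isIso₁ _ (d.triangle_mem n T.obj₃)).1 hN
  exact ObjectProperty.prop_of_iso (t.le n) (asIso ((d.ι n).app T.obj₃)) (d.τle_mem n T.obj₃)

lemma isZero_of_isZero_H (d : TruncData C t) {X : C} {a b : ℤ} (ha : t.ge a X) (hb : t.le b X)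
    (hH : ∀ n, IsZero ((d.H n).obj X)) : IsZero X := by
  have key : ∀ k : ℕ, ∀ b : ℤ, b ≤ a - 1 + k → ∀ X : C, t.ge a X → t.le b X →
      (∀ n, IsZero ((d.H n).obj X)) → IsZero X := by
    intro k
    induction k with
    | zero =>
      intro b hbk X ha hLE _
      rw [IsZero.iff_id_eq_zero]
      exact zero_hom hLE ha (by omega) _
    | succ k ih =>
      intro b hbk X ha hLE hH
      obtain ⟨c, rfl⟩ : ∃ c, b = c + 1 := ⟨b - 1, by omega⟩
      have hT := d.triangle_mem c X
      have hWle : t.le (c + 1) ((d.τge (c + 1)).obj X) :=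
        le_obj₃ d hT hLE (d.τle_mem c X) (by omega)
      have h1 : IsZero ((d.τge (c + 1 + 1)).obj ((d.τge (c + 1)).obj X)) :=
        isZero_τge_of_le d hWle (le_refl _)
      haveI : IsIso ((d.ι (c + 1)).app ((d.τge (c + 1)).obj X)) :=
        (Triangle.isZero₃_iff_isIso₁ _
          (d.triangle_mem (c + 1) ((d.τge (c + 1)).obj X))).1 h1
      have h2 : IsZero ((d.τle (c + 1)).obj ((d.τge (c + 1)).obj X)) :=
        (isZero_shift_iff _ (c + 1)).1 (hH (c + 1))
      have hWzero : IsZero ((d.τge (c + 1)).obj X) :=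
        h2.of_iso (asIso ((d.ι (c + 1)).app ((d.τge (c + 1)).obj X))).symm
      haveI : IsIso ((d.ι c).app X) := (Triangle.isZero₃_iff_isIso₁ _ hT).1 hWzero
      have hX' : t.le c X := ObjectProperty.prop_of_iso (t.le c) (asIso ((d.ι c).app X)) (d.τle_mem c X)
      exact ih c (by omega) X ha hX' hH
  exact key (b - (a - 1)).toNat b (by omega) X ha hb hH

end Aux

section AuxMonoidal

variable [MonoidalCategory C] {t : TStructure C}

/-- Each cohomology object lies in the heart. -/
lemma heart_H (d : TruncData C t) (X : C) (n : ℤ) : Heart t ((d.H n).obj X) := by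
  have hL : t.le n ((d.τle n).obj ((d.τge n).obj X)) := d.τle_mem _ _
  have hG : t.ge n ((d.τle n).obj ((d.τge n).obj X)) :=
    ge_obj₁ d (d.triangle_mem n ((d.τge n).obj X)) (d.τge_mem n X)
      (d.τge_mem (n + 1) _) (by omega)
  exact ⟨t.le_shift n n 0 (by omega) _ hL, t.ge_shift n n 0 (by omega) _ hG⟩

lemma isZero_fan_pt {ι : Type*} {A : ι → C} {P : C} (p : ∀ i, P ⟶ A i)
    (hl : IsLimit (Fan.mk P p)) (hP : IsZero P) (i : ι) : IsZero (A i) := by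
  classical
  rw [IsZero.iff_id_eq_zero]
  have h := hl.fac (Fan.mk (A i) (fun j => if h : i = j then eqToHom (by rw [h]) else 0)) ⟨i⟩
  simp only [Fan.mk_pt, Fan.mk_π_app, dite_eq_ite, if_pos rfl, if_true, eqToHom_refl] at h
  rw [← h, hP.eq_of_tgt (hl.lift _) 0, zero_comp]

lemma tensorReducedCat_of_tensorReduced (ht : IsBounded t) (d : TruncData C t)
    (hd : Kunneth d) (hred : TensorReduced t) : TensorReducedCat C := by
  intro X hXX
  obtain ⟨a, b, hb, ha⟩ := ht X
  refine isZero_of_isZero_H d ha hb (fun n => ?_)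
  obtain ⟨p, ⟨hl⟩⟩ := hd (n + n) X X
  have hfac := isZero_fan_pt p hl (isZero_H_of_isZero d hXX (n + n)) n
  rw [show n + n - n = n from by omega] at hfac
  exact hred _ (heart_H d X n) hfac

end AuxMonoidal

/-- For a monoidal t-structure `t` with `0` in its deviation, the ambient monoidal
triangulated category is tensor reduced iff `t` is tensor reduced.  Consequently, if
some tensor reduced monoidal t-structure exists, then every monoidal t-structure with
`0` in its deviation is tensor reduced. -/
theorem statement8 {C : Type*} [Category C] [Preadditive C] [HasZeroObject C] [HasShift C ℤ]
    [∀ n : ℤ, (shiftFunctor C n).Additive] [Pretriangulated C] [MonoidalCategory C]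
    [MonoidalTriangulated C]
    (t : TStructure C) (ht : IsBounded t) (d : TruncData C t) (hd : Kunneth d)
    (h0 : (0 : ℤ) ∈ dev C t 0) :
    (TensorReducedCat C ↔ TensorReduced t) ∧
    (TensorReduced t →
      ∀ (t' : TStructure C) (d' : TruncData C t'), IsBounded t' → Kunneth d' →
        (0 : ℤ) ∈ dev C t' 0 → TensorReduced t') := by
  refine ⟨⟨fun h X _ hz => h X hz,
    fun hred => tensorReducedCat_of_tensorReduced ht d hd hred⟩, ?_⟩
  intro hred t' d' _ _ _ X _ hz
  exact tensorReducedCat_of_tensorReduced ht d hd hred X hz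

end Paper
end

section
/- Let t and t₁ be tensor reduced monoidal t-structures on a monoidal triangulated category T (each with 0 in its deviation). If t and t₁ are equivalent (i.e. there exist integers m ≤ n with D^{≤m} ⊆ D₁^{≤0} ⊆ D^{≤n}), then t = t₁. -/
open CategoryTheory Category Limits Pretriangulated Triangulated MonoidalCategory

namespace Paper

variable (C : Type*) [Category C] [Preadditive C] [HasZeroObject C] [HasShift C ℤ]
  [∀ n : ℤ, (shiftFunctor C n).Additive] [Pretriangulated C]

variable {C}

section AuxLemmas

variable {C : Type*} [Category C] [Preadditive C] [HasZeroObject C] [HasShift C ℤ]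
  [∀ n : ℤ, (shiftFunctor C n).Additive] [Pretriangulated C]

set_option linter.unusedSectionVars false

variable (t : TStructure C)

lemma aux_tzero {a b : ℤ} (hab : a < b) {X Y : C} (f : X ⟶ Y)
    (hX : t.le a X) (hY : t.ge b Y) : f = 0 := by
  have h1 : t.le 0 (X⟦a⟧) := t.le_shift a a 0 (by omega) X hX
  have h2 : t.ge (b - a) (Y⟦a⟧) := t.ge_shift b a (b - a) (by omega) Y hY
  have h3 : t.ge 1 (Y⟦a⟧) := t.ge_antitone (by omega : (1:ℤ) ≤ b - a) _ h2
  have h4 : (shiftFunctor C a).map f = 0 := t.zero' _ h1 h3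
  apply (shiftFunctor C a).map_injective
  rw [h4, Functor.map_zero]

lemma aux_isZero_of_shift {X : C} (s : ℤ) (h : IsZero (X⟦s⟧)) : IsZero X :=
  ((shiftFunctor C (-s)).map_isZero h).of_iso (shiftShiftNeg X s).symm

lemma aux_le_of_shift_le {X : C} (s : ℤ) (h : t.le 0 (X⟦s⟧)) : t.le s X :=
  (t.le s).prop_of_iso (shiftShiftNeg X s) (t.le_shift 0 (-s) s (by omega) _ h)

variable (d : TruncData C t)

lemma aux_isZero_tauge (n : ℤ) (Y : C) (h : (d.π (n+1)).app Y = 0) :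
    IsZero ((d.τge (n+1)).obj Y) := by
  have hT := d.triangle_mem n Y
  obtain ⟨g, hg⟩ := Triangle.yoneda_exact₃ _ hT (𝟙 _) (by rw [comp_id]; exact h)
  dsimp at hg
  rw [IsZero.iff_id_eq_zero]; refine hg.trans ?_; rw [
    aux_tzero t (show n - 1 < n + 1 by omega) g
      (t.le_shift n 1 (n-1) (by omega) _ (d.τle_mem n Y)) (d.τge_mem (n+1) Y), comp_zero]; rfl

lemma aux_isZero_taule (n : ℤ) (Y : C) (h : (d.ι n).app Y = 0) :
    IsZero ((d.τle n).obj Y) := by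
  have hT := d.triangle_mem n Y
  obtain ⟨g, hg⟩ := Triangle.coyoneda_exact₁ _ hT (𝟙 _)
    (by simp only [Triangle.mk_mor₁, h, id_comp]; exact (shiftFunctor C 1).map_zero _ _)
  dsimp at hg
  apply aux_isZero_of_shift (X := (d.τle n).obj Y) 1
  rw [IsZero.iff_id_eq_zero]; refine hg.trans ?_; rw [
    aux_tzero t (show n - 1 < n + 1 by omega) g
      (t.le_shift n 1 (n-1) (by omega) _ (d.τle_mem n Y)) (d.τge_mem (n+1) Y), zero_comp]; rfl

include d in
lemma aux_le_two (T : Triangle C) (hT : T ∈ distTriang C) (n : ℤ)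
    (h1 : t.le n T.obj₁) (h3 : t.le n T.obj₃) : t.le n T.obj₂ := by
  have hm2 : (d.π (n+1)).app T.obj₂ = 0 := by
    have h0 : T.mor₁ ≫ (d.π (n+1)).app T.obj₂ = 0 :=
      aux_tzero t (show n < n+1 by omega) _ h1 (d.τge_mem _ _)
    obtain ⟨g, hg⟩ := Triangle.yoneda_exact₂ _ hT _ h0
    rw [hg, aux_tzero t (show n < n+1 by omega) g h3 (d.τge_mem _ _), comp_zero]
  have hB : IsZero ((d.τge (n+1)).obj T.obj₂) := aux_isZero_tauge t d n T.obj₂ hm2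
  have hiso : IsIso ((d.ι n).app T.obj₂) :=
    (Triangle.isZero₃_iff_isIso₁ _ (d.triangle_mem n T.obj₂)).1 hB
  exact (t.le n).prop_of_iso (asIso ((d.ι n).app T.obj₂)) (d.τle_mem n T.obj₂)

lemma aux_H_iso (n : ℤ) (X : C) (hX : t.le (n+1) X) :
    ∃ Y : C, t.le (n+1) Y ∧ t.ge (n+1) Y ∧
      Nonempty ((d.H (n+1)).obj X ≅ Y⟦(n+1 : ℤ)⟧) ∧ (IsZero Y → t.le n X) := by
  have hT := d.triangle_mem n X
  have hYle : t.le (n+1) ((d.τge (n+1)).obj X) := by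
    have hrot := rot_of_distTriang _ hT
    refine aux_le_two t d _ hrot (n+1) hX ?_
    exact t.le_monotone (show n-1 ≤ n+1 by omega) _
      (t.le_shift n 1 (n-1) (by omega) _ (d.τle_mem n X))
  have hz : IsZero ((d.τge (n+1+1)).obj ((d.τge (n+1)).obj X)) :=
    aux_isZero_tauge t d (n+1) _
      (aux_tzero t (show n+1 < n+1+1 by omega) _ hYle (d.τge_mem _ _))
  have hiso : IsIso ((d.ι (n+1)).app ((d.τge (n+1)).obj X)) :=
    (Triangle.isZero₃_iff_isIso₁ _ (d.triangle_mem (n+1) _)).1 hz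
  refine ⟨(d.τge (n+1)).obj X, hYle, d.τge_mem _ X,
    ⟨(shiftFunctor C (n+1)).mapIso (asIso ((d.ι (n+1)).app ((d.τge (n+1)).obj X)))⟩, ?_⟩
  intro h0
  have hiso' : IsIso ((d.ι n).app X) := (Triangle.isZero₃_iff_isIso₁ _ hT).1 h0
  exact (t.le n).prop_of_iso (asIso ((d.ι n).app X)) (d.τle_mem n X)

lemma aux_H_heart {m : ℤ} {X : C} (hX : t.le m X) : Heart t ((d.H m).obj X) := by
  obtain ⟨n, rfl⟩ : ∃ n : ℤ, m = n + 1 := ⟨m - 1, by omega⟩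
  obtain ⟨Y, hle, hge, ⟨e⟩, -⟩ := aux_H_iso t d n X hX
  exact ⟨(t.le 0).prop_of_iso e.symm (t.le_shift (n+1) (n+1) 0 (by omega) _ hle),
    (t.ge 0).prop_of_iso e.symm (t.ge_shift (n+1) (n+1) 0 (by omega) _ hge)⟩

lemma aux_H_ne_zero_of_min {m : ℤ} {X : C} (hX : t.le m X) (h' : ¬ t.le (m-1) X) :
    ¬ IsZero ((d.H m).obj X) := by
  obtain ⟨n, rfl⟩ : ∃ n : ℤ, m = n + 1 := ⟨m - 1, by omega⟩
  obtain ⟨Y, -, -, ⟨e⟩, hlast⟩ := aux_H_iso t d n X hX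
  intro hz
  have hY0 : IsZero Y := aux_isZero_of_shift (n+1) (hz.of_iso e.symm)
  rw [show n + 1 - 1 = n by omega] at h'
  exact h' (hlast hY0)

lemma aux_isZero_H {m q : ℤ} {X : C} (hX : t.le m X) (hq : m < q) :
    IsZero ((d.H q).obj X) := by
  obtain ⟨r, rfl⟩ : ∃ r : ℤ, q = r + 1 := ⟨q - 1, by omega⟩
  have h1 : IsZero ((d.τge (r+1)).obj X) :=
    aux_isZero_tauge t d r X
      (aux_tzero t (show r < r+1 by omega) _ (t.le_monotone (by omega : m ≤ r) _ hX)
        (d.τge_mem _ _))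
  have h2 : IsZero ((d.τle (r+1)).obj ((d.τge (r+1)).obj X)) :=
    aux_isZero_taule t d (r+1) _ (h1.eq_of_tgt _ _)
  exact (shiftFunctor C (r+1)).map_isZero h2

noncomputable def aux_fan_iso {F : ℤ → C} {c : C} {p : ∀ q : ℤ, c ⟶ F q}
    (hL : IsLimit (Fan.mk c p)) (m : ℤ) (hz : ∀ q, q ≠ m → IsZero (F q)) : c ≅ F m := by
  classical
  let s : Fan F := Fan.mk (F m)
    (fun q => if h : q = m then eqToHom (by rw [h]) else (hz q h).from_ (F m))
  have h1 : hL.lift s ≫ p m = 𝟙 (F m) := by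
    have := hL.fac s ⟨m⟩
    simpa [s] using this
  have h2 : p m ≫ hL.lift s = 𝟙 c := by
    apply hL.hom_ext
    rintro ⟨j⟩
    by_cases hj : j = m
    · subst hj
      simp only [Fan.mk_π_app, assoc, h1, comp_id, id_comp]
    · simp only [Fan.mk_π_app]
      exact (hz j hj).eq_of_tgt _ _
  exact ⟨p m, hL.lift s, h2, h1⟩

section MonAux

open ZeroObject

variable [MonoidalCategory C] [MonoidalTriangulated C]

lemma aux_isZero_tensor_left {X : C} (hX : IsZero X) (Y : C) : IsZero (X ⊗ Y) := by
  have hT := MonoidalTriangulated.whiskerRight_distinguished Y _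
    (contractible_distinguished X)
  have h0 : IsZero ((0 : C) ⊗ Y) := by
    refine Triangle.isZero₃_of_isIso₁ _ hT ?_
    show IsIso ((𝟙 X) ▷ Y)
    rw [MonoidalCategory.id_whiskerRight]
    infer_instance
  exact h0.of_iso (whiskerRightIso hX.isoZero Y)

lemma aux_isZero_tensor_right {Y : C} (hY : IsZero Y) (X : C) : IsZero (X ⊗ Y) := by
  have hT := MonoidalTriangulated.whiskerLeft_distinguished X _
    (contractible_distinguished Y)
  have h0 : IsZero (X ⊗ (0 : C)) := by
    refine Triangle.isZero₃_of_isIso₁ _ hT ?_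
    show IsIso (X ◁ (𝟙 Y))
    rw [MonoidalCategory.whiskerLeft_id]
    infer_instance
  exact h0.of_iso (whiskerLeftIso X hY.isoZero)

lemma aux_tensor_le (h0 : (0:ℤ) ∈ dev C t 0) {a b : ℤ} {X Y : C}
    (hX : t.le a X) (hY : t.le b Y) : t.le (a+b) (X ⊗ Y) := by
  have hA : t.le 0 (X⟦a⟧) := t.le_shift a a 0 (by omega) X hX
  have hB : t.le (0+0) (Y⟦b⟧) := by
    rw [zero_add]; exact t.le_shift b b 0 (by omega) Y hY
  have h1 : t.le 0 ((X⟦a⟧) ⊗ (Y⟦b⟧)) := h0.1 _ _ hA hB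
  have e : (X⟦a⟧) ⊗ (Y⟦b⟧) ≅ (X ⊗ Y)⟦b + a⟧ :=
    (MonoidalTriangulated.shiftTensor a X (Y⟦b⟧)) ≪≫
      (shiftFunctor C a).mapIso (MonoidalTriangulated.tensorShift b X Y) ≪≫
      ((shiftFunctorAdd C b a).app (X ⊗ Y)).symm
  have h2 := aux_le_of_shift_le t (b+a) ((t.le 0).prop_of_iso e h1)
  rwa [add_comm b a] at h2

lemma aux_kstep (hd : Kunneth d) (h0 : (0:ℤ) ∈ dev C t 0) (hred : TensorReduced t)
    {m : ℤ} {X : C} (hX : t.le m X) (hH : ¬ IsZero ((d.H m).obj X)) :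
    t.le (m+m) (X ⊗ X) ∧ ¬ IsZero ((d.H (m+m)).obj (X ⊗ X)) := by
  obtain ⟨p, ⟨hL⟩⟩ := hd (m+m) X X
  have hz : ∀ q : ℤ, q ≠ m → IsZero (((d.H q).obj X) ⊗ ((d.H (m+m-q)).obj X)) := by
    intro q hq
    rcases lt_or_gt_of_ne hq with h | h
    · exact aux_isZero_tensor_right (aux_isZero_H t d hX (by omega)) _
    · exact aux_isZero_tensor_left (aux_isZero_H t d hX h) _
  have e : (d.H (m+m)).obj (X ⊗ X) ≅ ((d.H m).obj X) ⊗ ((d.H (m+m-m)).obj X) :=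
    aux_fan_iso hL m hz
  rw [show m + m - m = m by omega] at e
  refine ⟨aux_tensor_le t h0 hX hX, fun hzero => ?_⟩
  exact hH (hred _ (aux_H_heart t d hX) (hzero.of_iso e.symm))

lemma aux_no_gap (t t₁ : TStructure C) (d : TruncData C t) (hd : Kunneth d)
    (h0t : (0:ℤ) ∈ dev C t 0) (h0₁ : (0:ℤ) ∈ dev C t₁ 0) (hred : TensorReduced t)
    (ht : IsBounded t) (c : ℤ) (hc : ∀ Z : C, t₁.le 0 Z → t.le c Z) :
    ∀ X : C, t₁.le 0 X → t.le 0 X := by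
  intro X hX1
  by_contra h0X
  obtain ⟨a, b, hb, -⟩ := ht X
  have hbdd : ∀ z : ℤ, t.le z X → 1 ≤ z := by
    intro z hz
    by_contra hz1
    exact h0X (t.le_monotone (by omega : z ≤ 0) _ hz)
  obtain ⟨k, hk2, hkmin⟩ : ∃ k : ℤ, t.le k X ∧ ∀ z, t.le z X → k ≤ z := by
    classical
    exact Int.exists_least_of_bdd ⟨1, hbdd⟩ ⟨b, hb⟩
  have hk1 : 1 ≤ k := hbdd k hk2
  have hk3 : ¬ t.le (k-1) X := fun h => by have := hkmin _ h; omega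
  have hH : ¬ IsZero ((d.H k).obj X) := aux_H_ne_zero_of_min t d hk2 hk3
  let sq : ℕ → C := fun j => (fun Z : C => Z ⊗ Z)^[j] X
  have main : ∀ j : ℕ, t₁.le 0 (sq j) ∧ t.le ((2:ℤ)^j * k) (sq j) ∧
      ¬ IsZero ((d.H ((2:ℤ)^j * k)).obj (sq j)) := by
    intro j
    induction j with
    | zero =>
      refine ⟨hX1, ?_, ?_⟩
      · simpa [sq] using hk2
      · simpa [sq] using hH
    | succ j ih =>
      obtain ⟨i1, i2, i3⟩ := ih
      have hsq : sq (j+1) = sq j ⊗ sq j := Function.iterate_succ_apply' _ j X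
      have hk' := aux_kstep t d hd h0t hred i2 i3
      have hpow : (2:ℤ)^(j+1) * k = (2:ℤ)^j * k + (2:ℤ)^j * k := by ring
      refine ⟨?_, ?_, ?_⟩
      · rw [hsq]
        refine h0₁.1 _ _ i1 ?_
        rw [zero_add]; exact i1
      · rw [hsq, hpow]; exact hk'.1
      · rw [hsq, hpow]; exact hk'.2
  obtain ⟨j, hj⟩ : ∃ j : ℕ, c < (2:ℤ)^j * k := by
    refine ⟨c.toNat, ?_⟩
    have h1 : (c.toNat : ℤ) < (2:ℤ)^(c.toNat) := by
      exact_mod_cast Nat.lt_two_pow_self (n := c.toNat)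
    have h2 : (2:ℤ)^(c.toNat) ≤ (2:ℤ)^(c.toNat) * k :=
      le_mul_of_one_le_right (by positivity) hk1
    have h3 : c ≤ (c.toNat : ℤ) := Int.self_le_toNat c
    exact lt_of_le_of_lt h3 (lt_of_lt_of_le h1 h2)
  obtain ⟨j1, j2, j3⟩ := main j
  exact j3 (aux_isZero_H t d (hc _ j1) hj)

end MonAux

lemma aux_ge_transfer (t t₁ : TStructure C) (d : TruncData C t)
    (hle : ∀ (s : ℤ) (X : C), t.le s X → t₁.le s X) {s : ℤ} {X : C}
    (hX : t₁.ge s X) : t.ge s X := by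
  have hT := d.triangle_mem (s-1) X
  have hm1 : (d.ι (s-1)).app X = 0 :=
    aux_tzero t₁ (show s-1 < s by omega) _ (hle _ _ (d.τle_mem (s-1) X)) hX
  have hz : IsZero ((d.τle (s-1)).obj X) := aux_isZero_taule t d (s-1) X hm1
  have hiso : IsIso ((d.π (s-1+1)).app X) := (Triangle.isZero₁_iff_isIso₂ _ hT).1 hz
  have h2 := (t.ge (s-1+1)).prop_of_iso (asIso ((d.π (s-1+1)).app X)).symm
    (d.τge_mem (s-1+1) X)
  rwa [sub_add_cancel] at h2

end AuxLemmas

/-- Two equivalent tensor reduced monoidal t-structures on a monoidal triangulated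
category are equal. -/
theorem statement9 {C : Type*} [Category C] [Preadditive C] [HasZeroObject C] [HasShift C ℤ]
    [∀ n : ℤ, (shiftFunctor C n).Additive] [Pretriangulated C] [MonoidalCategory C]
    [MonoidalTriangulated C] (hC : ∃ X : C, ¬ IsZero X)
    (t t₁ : TStructure C) (ht : IsBounded t) (ht₁ : IsBounded t₁)
    (d : TruncData C t) (d₁ : TruncData C t₁) (hd : Kunneth d) (hd₁ : Kunneth d₁)
    (h0 : (0 : ℤ) ∈ dev C t 0) (h0₁ : (0 : ℤ) ∈ dev C t₁ 0)
    (hred : TensorReduced t) (hred₁ : TensorReduced t₁)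
    (m n : ℤ) (hmn : m ≤ n)
    (h1 : ∀ X : C, t.le m X → t₁.le 0 X) (h2 : ∀ X : C, t₁.le 0 X → t.le n X) :
    t = t₁ := by
  have E1 : ∀ X : C, t₁.le 0 X → t.le 0 X :=
    aux_no_gap t t₁ d hd h0 h0₁ hred ht n h2
  have hc2 : ∀ Z : C, t.le 0 Z → t₁.le (-m) Z := by
    intro Z hZ
    exact aux_le_of_shift_le t₁ (-m) (h1 _ (t.le_shift 0 (-m) m (by omega) Z hZ))
  have E2 : ∀ X : C, t.le 0 X → t₁.le 0 X :=
    aux_no_gap t₁ t d₁ hd₁ h0₁ h0 hred₁ ht₁ (-m) hc2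
  have hle : ∀ (s : ℤ) (X : C), t.le s X ↔ t₁.le s X := by
    intro s X
    constructor
    · intro h
      exact aux_le_of_shift_le t₁ s (E2 _ (t.le_shift s s 0 (by omega) X h))
    · intro h
      exact aux_le_of_shift_le t s (E1 _ (t₁.le_shift s s 0 (by omega) X h))
  have hge : ∀ (s : ℤ) (X : C), t.ge s X ↔ t₁.ge s X := by
    intro s X
    constructor
    · intro h
      exact aux_ge_transfer t₁ t d₁ (fun s X hx => (hle s X).2 hx) h
    · intro h
      exact aux_ge_transfer t t₁ d (fun s X hx => (hle s X).1 hx) h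
  have hL : t.le = t₁.le := funext fun s => funext fun X => propext (hle s X)
  have hG : t.ge = t₁.ge := funext fun s => funext fun X => propext (hge s X)
  cases t
  cases t₁
  dsimp at hL hG
  subst hL
  subst hG
  congr


end Paper
end

section
/- Let t be a tensor reduced monoidal t-structure on a monoidal triangulated category T in which every object has a left dual. Then (D^{≤0})* ⊆ D^{≥0} and (D^{≥0})* ⊆ D^{≤0}, where (−)* denotes left duals; consequently the heart H_t is closed under taking left duals. Dually for right duals. In particular, if T is rigid and End(𝟙) ≅ k, then H_t is a tensor category. -/
open CategoryTheory Category Limits Pretriangulated Triangulated MonoidalCategory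

namespace Paper

variable (C : Type*) [Category C] [Preadditive C] [HasZeroObject C] [HasShift C ℤ]
  [∀ n : ℤ, (shiftFunctor C n).Additive] [Pretriangulated C]

variable {C}

section AuxTrunc

variable {t : TStructure C}

lemma homZero {a b : ℤ} (hab : a < b) {X Y : C} (hX : t.le a X) (hY : t.ge b Y)
    (f : X ⟶ Y) : f = 0 := by
  have h1 : t.le 0 (X⟦a⟧) := t.le_shift a a 0 (by omega) X hX
  have h2 : t.ge 1 (Y⟦a⟧) :=
    t.ge_antitone (show (1:ℤ) ≤ b - a by omega) _ (t.ge_shift b a (b - a) (by omega) Y hY)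
  have h3 := t.zero' ((shiftFunctor C a).map f) h1 h2
  apply (shiftFunctor C a).map_injective
  rw [h3, Functor.map_zero]

lemma isZero_shift {X : C} (h : IsZero X) (n : ℤ) : IsZero (X⟦n⟧) :=
  (shiftFunctor C n).map_isZero h

lemma isZero_of_shift {X : C} (n : ℤ) (h : IsZero (X⟦n⟧)) : IsZero X :=
  (isZero_shift h (-n)).of_iso (shiftShiftNeg X n).symm

variable (d : TruncData C t)

include d

lemma isZero_τge_of_π_zero (n : ℤ) (X : C) (h : (d.π (n + 1)).app X = 0) :
    IsZero ((d.τge (n + 1)).obj X) := by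
  obtain ⟨g, hg⟩ := Triangle.yoneda_exact₃ _ (d.triangle_mem n X) (𝟙 _)
    (by exact (comp_id _).trans h)
  have hg0 : g = 0 := homZero (show n - 1 < n + 1 by omega)
      (t.le_shift n 1 (n - 1) (by omega) _ (d.τle_mem n X)) (d.τge_mem (n + 1) X) g
  rw [hg0, comp_zero] at hg
  exact (IsZero.iff_id_eq_zero _).2 hg

lemma isZero_τle_of_ι_zero (n : ℤ) (X : C) (h : (d.ι n).app X = 0) :
    IsZero ((d.τle n).obj X) := by
  obtain ⟨g, hg⟩ := Triangle.coyoneda_exact₁ _ (d.triangle_mem n X)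
    (𝟙 ((((d.τle n).obj X))⟦(1:ℤ)⟧)) (by exact (id_comp _).trans ((congrArg (shiftFunctor C 1).map h).trans (Functor.map_zero _ _ _)))
  have hg0 : g = 0 := homZero (show n - 1 < n + 1 by omega)
      (t.le_shift n 1 (n - 1) (by omega) _ (d.τle_mem n X)) (d.τge_mem (n + 1) X) g
  rw [hg0, zero_comp] at hg
  have hz : IsZero ((((d.τle n).obj X))⟦(1:ℤ)⟧) := (IsZero.iff_id_eq_zero _).2 hg
  exact isZero_of_shift _ hz

lemma π_zero_of_le (n : ℤ) (X : C) (h : t.le n X) : (d.π (n + 1)).app X = 0 :=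
  homZero (lt_add_one n) h (d.τge_mem _ X) _

lemma ι_zero_of_ge (n : ℤ) (X : C) (h : t.ge (n + 1) X) : (d.ι n).app X = 0 :=
  homZero (lt_add_one n) (d.τle_mem n X) h _

lemma isIso_ι_of_le (n : ℤ) (X : C) (h : t.le n X) : IsIso ((d.ι n).app X) :=
  (Triangle.isZero₃_iff_isIso₁ _ (d.triangle_mem n X)).1
    (isZero_τge_of_π_zero d n X (π_zero_of_le d n X h))

lemma isIso_π_of_ge (n : ℤ) (X : C) (h : t.ge (n + 1) X) : IsIso ((d.π (n + 1)).app X) :=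
  (Triangle.isZero₁_iff_isIso₂ _ (d.triangle_mem n X)).1
    (isZero_τle_of_ι_zero d n X (ι_zero_of_ge d n X h))

lemma le_of_π_zero (n : ℤ) (X : C) (h : (d.π (n + 1)).app X = 0) : t.le n X := by
  have h1 := (Triangle.isZero₃_iff_isIso₁ _ (d.triangle_mem n X)).1
    (isZero_τge_of_π_zero d n X h)
  exact ObjectProperty.prop_of_iso (t.le n) (@asIso _ _ _ _ _ h1) (d.τle_mem n X)

lemma ge_of_ι_zero (n : ℤ) (X : C) (h : (d.ι n).app X = 0) : t.ge (n + 1) X := by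
  have h1 := (Triangle.isZero₁_iff_isIso₂ _ (d.triangle_mem n X)).1
    (isZero_τle_of_ι_zero d n X h)
  exact ObjectProperty.prop_of_iso (t.ge (n + 1)) (@asIso _ _ _ _ _ h1).symm (d.τge_mem (n + 1) X)

lemma le₂ (T : Triangle C) (hT : T ∈ distTriang C) (n : ℤ)
    (h₁ : t.le n T.obj₁) (h₃ : t.le n T.obj₃) : t.le n T.obj₂ := by
  apply le_of_π_zero d
  obtain ⟨g, hg⟩ := Triangle.yoneda_exact₂ _ hT ((d.π (n + 1)).app T.obj₂)
    (homZero (lt_add_one n) h₁ (d.τge_mem _ _) _)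
  rw [hg, homZero (lt_add_one n) h₃ (d.τge_mem _ _) g, comp_zero]

lemma ge₂ (T : Triangle C) (hT : T ∈ distTriang C) (n : ℤ)
    (h₁ : t.ge n T.obj₁) (h₃ : t.ge n T.obj₃) : t.ge n T.obj₂ := by
  rw [show n = n - 1 + 1 by omega]
  apply ge_of_ι_zero d
  obtain ⟨g, hg⟩ := Triangle.coyoneda_exact₂ _ hT ((d.ι (n - 1)).app T.obj₂)
    (homZero (show n - 1 < n by omega) (d.τle_mem _ _) h₃ _)
  rw [hg, homZero (show n - 1 < n by omega) (d.τle_mem _ _) h₁ g, zero_comp]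

lemma H_heart (n : ℤ) (X : C) : Heart t ((d.H n).obj X) := by
  have hU : t.ge n ((d.τge n).obj X) := d.τge_mem n X
  set U := (d.τge n).obj X with hUdef
  have hV : t.le n ((d.τle n).obj U) := d.τle_mem n U
  have hVge : t.ge n ((d.τle n).obj U) := by
    have hT2 := rot_of_distTriang _ (rot_of_distTriang _ (d.triangle_mem n U))
    have h := ge₂ d _ hT2 (n - 1)
      (t.ge_antitone (show n - 1 ≤ n + 1 by omega) _ (d.τge_mem (n + 1) U))
      (t.ge_shift n 1 (n - 1) (by omega) U hU)
    have h2 := t.ge_shift (n - 1) (-1) n (by omega) _ h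
    exact ObjectProperty.prop_of_iso (t.ge n) (shiftShiftNeg ((d.τle n).obj U) 1) h2
  exact ⟨t.le_shift n n 0 (by omega) _ hV, t.ge_shift n n 0 (by omega) _ hVge⟩

lemma isZero_H_of_le (n b : ℤ) (X : C) (hb : t.le b X) (hn : b < n) :
    IsZero ((d.H n).obj X) := by
  have hU : IsZero ((d.τge n).obj X) := by
    have h := isZero_τge_of_π_zero d (n - 1) X
      (π_zero_of_le d (n - 1) X (t.le_monotone (show b ≤ n - 1 by omega) _ hb))
    rwa [show n - 1 + 1 = n by omega] at h
  have hV : IsZero ((d.τle n).obj ((d.τge n).obj X)) :=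
    isZero_τle_of_ι_zero d n _ (hU.eq_of_tgt _ _)
  exact isZero_shift hV n

lemma isZero_H_of_ge (n a : ℤ) (X : C) (ha : t.ge a X) (hn : n < a) :
    IsZero ((d.H n).obj X) := by
  have hπ : IsIso ((d.π n).app X) := by
    have h := isIso_π_of_ge d (n - 1) X (by
      rw [show n - 1 + 1 = n by omega]
      exact t.ge_antitone (show n ≤ a by omega) _ ha)
    rwa [show n - 1 + 1 = n by omega] at h
  have hτleX : IsZero ((d.τle n).obj X) :=
    isZero_τle_of_ι_zero d n X
      (ι_zero_of_ge d n X (t.ge_antitone (show n + 1 ≤ a by omega) _ ha))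
  have hV : IsZero ((d.τle n).obj ((d.τge n).obj X)) :=
    hτleX.of_iso ((d.τle n).mapIso (@asIso _ _ _ _ _ hπ)).symm
  exact isZero_shift hV n

lemma le_step (n : ℤ) (X : C) (hle : t.le n X) (hH : IsZero ((d.H n).obj X)) :
    t.le (n - 1) X := by
  obtain ⟨m, rfl⟩ : ∃ m, n = m + 1 := ⟨n - 1, by omega⟩
  rw [show m + 1 - 1 = m by omega]
  have hT := d.triangle_mem m X
  have hUle : t.le (m + 1) ((d.τge (m + 1)).obj X) :=
    le₂ d _ (rot_of_distTriang _ hT) (m + 1) hle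
      (t.le_monotone (show m - 1 ≤ m + 1 by omega) _
        (t.le_shift m 1 (m - 1) (by omega) _ (d.τle_mem m X)))
  have hV : IsZero ((d.τle (m + 1)).obj ((d.τge (m + 1)).obj X)) :=
    isZero_of_shift (m + 1) hH
  have hU : IsZero ((d.τge (m + 1)).obj X) := by
    have hιiso := isIso_ι_of_le d (m + 1) _ hUle
    exact hV.of_iso (@asIso _ _ _ _ _ hιiso).symm
  have h1 := (Triangle.isZero₃_iff_isIso₁ _ hT).1 hU
  exact ObjectProperty.prop_of_iso (t.le m) (@asIso _ _ _ _ _ h1) (d.τle_mem m X)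

lemma ge_step (n : ℤ) (X : C) (hge : t.ge n X) (hH : IsZero ((d.H n).obj X)) :
    t.ge (n + 1) X := by
  obtain ⟨k, rfl⟩ : ∃ k, n = k + 1 := ⟨n - 1, by omega⟩
  have hπ : IsIso ((d.π (k + 1)).app X) := isIso_π_of_ge d k X hge
  have hV : IsZero ((d.τle (k + 1)).obj ((d.τge (k + 1)).obj X)) :=
    isZero_of_shift (k + 1) hH
  have hτleX : IsZero ((d.τle (k + 1)).obj X) :=
    hV.of_iso ((d.τle (k + 1)).mapIso (@asIso _ _ _ _ _ hπ))
  have h2 := (Triangle.isZero₁_iff_isIso₂ _ (d.triangle_mem (k + 1) X)).1 hτleX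
  exact ObjectProperty.prop_of_iso (t.ge (k + 1 + 1)) (@asIso _ _ _ _ _ h2).symm (d.τge_mem (k + 1 + 1) X)

lemma ge_of_hom_zero (Y : C) (h : ∀ (W : C), t.le (-1) W → ∀ f : W ⟶ Y, f = 0) :
    t.ge 0 Y :=
  ge_of_ι_zero d (-1) Y (h _ (d.τle_mem _ _) _)

lemma le_of_hom_zero (Y : C) (h : ∀ (W : C), t.ge 1 W → ∀ f : Y ⟶ W, f = 0) :
    t.le 0 Y :=
  le_of_π_zero d 0 Y (h _ (by simpa using d.τge_mem (0 + 1) Y) _)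

end AuxTrunc

section AuxMonoidal

variable [MonoidalCategory C] [MonoidalTriangulated C]

lemma isZero_tensor_right {Z : C} (hZ : IsZero Z) (Y : C) : IsZero (Z ⊗ Y) := by
  have hT := inv_rot_of_distTriang _ (contractible_distinguished Z)
  have hT' := MonoidalTriangulated.whiskerRight_distinguished Y _ hT
  have h2 : IsIso ((contractibleTriangle Z).invRotate.mor₂ ▷ Y) := by
    show IsIso (𝟙 Z ▷ Y)
    rw [MonoidalCategory.id_whiskerRight]
    infer_instance
  have h3 := Triangle.isZero₁_of_isIso₂ _ hT' h2
  exact h3.of_iso (whiskerRightIso (hZ.iso (isZero_shift (isZero_zero C) (-1))) Y)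

lemma isZero_fan_factor {F : ℤ → C} {P : C} {p : ∀ q : ℤ, P ⟶ F q}
    (hl : IsLimit (Fan.mk P p)) (hP : IsZero P) (q : ℤ) : IsZero (F q) := by
  classical
  let c : Fan F := Fan.mk (F q)
    (fun q' => if h : q = q' then eqToHom (by rw [h]) else 0)
  have hfac := hl.fac c ⟨q⟩
  have hlift : hl.lift c = 0 := hP.eq_of_tgt _ _
  have hcq : c.π.app ⟨q⟩ = 𝟙 (F q) := by simp [c]
  rw [IsZero.iff_id_eq_zero, ← hcq, ← hfac, hlift, zero_comp]

variable {t : TStructure C}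

lemma tensor_le_left (h0 : (0 : ℤ) ∈ dev C t 0) {X W : C}
    (hX : t.le 0 X) (hW : t.le (-1) W) : t.le (-1) (X ⊗ W) := by
  have h1 : t.le 0 (W⟦(-1:ℤ)⟧) := t.le_shift (-1) (-1) 0 (by omega) W hW
  have h2 : t.le 0 (X ⊗ (W⟦(-1:ℤ)⟧)) := h0.1 X _ hX h1
  have h3 : t.le 0 ((X ⊗ W)⟦(-1:ℤ)⟧) :=
    ObjectProperty.prop_of_iso (t.le 0) (MonoidalTriangulated.tensorShift (-1) X W) h2
  have h4 := t.le_shift 0 1 (-1) (by omega) _ h3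
  exact ObjectProperty.prop_of_iso (t.le (-1)) (shiftNegShift (X ⊗ W) 1) h4

lemma tensor_le_right (h0 : (0 : ℤ) ∈ dev C t 0) {X W : C}
    (hW : t.le (-1) W) (hX : t.le 0 X) : t.le (-1) (W ⊗ X) := by
  have h1 : t.le 0 (W⟦(-1:ℤ)⟧) := t.le_shift (-1) (-1) 0 (by omega) W hW
  have h2 : t.le 0 ((W⟦(-1:ℤ)⟧) ⊗ X) := h0.1 _ X h1 hX
  have h3 : t.le 0 ((W ⊗ X)⟦(-1:ℤ)⟧) :=
    ObjectProperty.prop_of_iso (t.le 0) (MonoidalTriangulated.shiftTensor (-1) W X) h2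
  have h4 := t.le_shift 0 1 (-1) (by omega) _ h3
  exact ObjectProperty.prop_of_iso (t.le (-1)) (shiftNegShift (W ⊗ X) 1) h4

lemma tensor_ge_left (h0 : (0 : ℤ) ∈ dev C t 0) {X B : C}
    (hX : t.ge 0 X) (hB : t.ge 1 B) : t.ge 1 (X ⊗ B) := by
  have h1 : t.ge 0 (B⟦(1:ℤ)⟧) := t.ge_shift 1 1 0 (by omega) B hB
  have h2 : t.ge 0 (X ⊗ (B⟦(1:ℤ)⟧)) := h0.2 X _ hX h1
  have h3 : t.ge 0 ((X ⊗ B)⟦(1:ℤ)⟧) :=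
    ObjectProperty.prop_of_iso (t.ge 0) (MonoidalTriangulated.tensorShift 1 X B) h2
  have h4 := t.ge_shift 0 (-1) 1 (by omega) _ h3
  exact ObjectProperty.prop_of_iso (t.ge 1) (shiftShiftNeg (X ⊗ B) 1) h4

lemma tensor_ge_right (h0 : (0 : ℤ) ∈ dev C t 0) {X B : C}
    (hB : t.ge 1 B) (hX : t.ge 0 X) : t.ge 1 (B ⊗ X) := by
  have h1 : t.ge 0 (B⟦(1:ℤ)⟧) := t.ge_shift 1 1 0 (by omega) B hB
  have h2 : t.ge 0 ((B⟦(1:ℤ)⟧) ⊗ X) := h0.2 _ X h1 hX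
  have h3 : t.ge 0 ((B ⊗ X)⟦(1:ℤ)⟧) :=
    ObjectProperty.prop_of_iso (t.ge 0) (MonoidalTriangulated.shiftTensor 1 B X) h2
  have h4 := t.ge_shift 0 (-1) 1 (by omega) _ h3
  exact ObjectProperty.prop_of_iso (t.ge 1) (shiftShiftNeg (B ⊗ X) 1) h4

lemma one_mem_heart (hC : ∃ X : C, ¬ IsZero X) {t : TStructure C} (ht : IsBounded t)
    (d : TruncData C t) (hd : Kunneth d) (h0 : (0 : ℤ) ∈ dev C t 0)
    (hred : TensorReduced t) : Heart t (𝟙_ C) := by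
  have h1 : ¬ IsZero (𝟙_ C) := by
    intro h
    obtain ⟨X, hX⟩ := hC
    exact hX ((isZero_tensor_right h X).of_iso (λ_ X).symm)
  obtain ⟨a0, b0, hb0, ha0⟩ := ht (𝟙_ C)
  obtain ⟨b, hb, hbmin⟩ := Int.exists_least_of_bdd (P := fun c => t.le c (𝟙_ C))
    ⟨a0, fun z hz => by
      by_contra hlt
      push_neg at hlt
      exact h1 ((IsZero.iff_id_eq_zero _).2 (homZero hlt hz ha0 _))⟩ ⟨b0, hb0⟩
  have hble : b ≤ 0 := by
    by_contra hbpos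
    push_neg at hbpos
    obtain ⟨p, ⟨hl⟩⟩ := hd (2 * b) (𝟙_ C) (𝟙_ C)
    have hapex : IsZero ((d.H (2 * b)).obj (𝟙_ C ⊗ 𝟙_ C)) :=
      isZero_H_of_le d (2 * b) b _ (ObjectProperty.prop_of_iso (t.le b) (λ_ (𝟙_ C)).symm hb) (by omega)
    have hfac := isZero_fan_factor hl hapex b
    rw [show 2 * b - b = b by ring] at hfac
    have hHz : IsZero ((d.H b).obj (𝟙_ C)) := hred _ (H_heart d b _) hfac
    have hstep := le_step d b _ hb hHz
    exact absurd (hbmin _ hstep) (by omega)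
  have hLE : t.le 0 (𝟙_ C) := t.le_monotone hble _ hb
  refine ⟨hLE, ?_⟩
  have hub : ∀ z : ℤ, t.ge z (𝟙_ C) → z ≤ 0 := fun z hz => by
    by_contra hlt
    push_neg at hlt
    exact h1 ((IsZero.iff_id_eq_zero _).2
      (homZero (show (0:ℤ) < z by omega) hLE hz _))
  obtain ⟨a, ha, hamax⟩ := Int.exists_greatest_of_bdd (P := fun c => t.ge c (𝟙_ C))
    ⟨0, hub⟩ ⟨a0, ha0⟩
  have hage : 0 ≤ a := by
    by_contra hneg
    push_neg at hneg
    obtain ⟨p, ⟨hl⟩⟩ := hd (2 * a) (𝟙_ C) (𝟙_ C)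
    have hapex : IsZero ((d.H (2 * a)).obj (𝟙_ C ⊗ 𝟙_ C)) :=
      isZero_H_of_ge d (2 * a) a _ (ObjectProperty.prop_of_iso (t.ge a) (λ_ (𝟙_ C)).symm ha) (by omega)
    have hfac := isZero_fan_factor hl hapex a
    rw [show 2 * a - a = a by ring] at hfac
    have hHz : IsZero ((d.H a).obj (𝟙_ C)) := hred _ (H_heart d a _) hfac
    have hstep := ge_step d a _ ha hHz
    exact absurd (hamax _ hstep) (by omega)
  have ha0' : a = 0 := le_antisymm (hub a ha) hage
  exact ha0' ▸ ha

end AuxMonoidal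

/-- For a tensor reduced monoidal t-structure `t`: duals of objects of the aisle lie in
the coaisle and conversely, so the heart is closed under taking (left or right) duals.
(Here `ᘁX` and `Xᘁ` denote the two duals of `X`; in particular, when the ambient
category is rigid with `End(𝟙) ≅ k`, the heart is a tensor category.) -/
theorem statement11 {C : Type*} [Category C] [Preadditive C] [HasZeroObject C] [HasShift C ℤ]
    [∀ n : ℤ, (shiftFunctor C n).Additive] [Pretriangulated C] [MonoidalCategory C]
    [MonoidalTriangulated C] (hC : ∃ X : C, ¬ IsZero X)
    (t : TStructure C) (ht : IsBounded t) (d : TruncData C t) (hd : Kunneth d)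
    (h0 : (0 : ℤ) ∈ dev C t 0) (hred : TensorReduced t) :
    (∀ (X : C) [HasLeftDual X], t.le 0 X → t.ge 0 (ᘁX)) ∧
    (∀ (X : C) [HasLeftDual X], t.ge 0 X → t.le 0 (ᘁX)) ∧
    (∀ (X : C) [HasLeftDual X], Heart t X → Heart t (ᘁX)) ∧
    (∀ (X : C) [HasRightDual X], t.le 0 X → t.ge 0 (Xᘁ)) ∧
    (∀ (X : C) [HasRightDual X], t.ge 0 X → t.le 0 (Xᘁ)) ∧
    (∀ (X : C) [HasRightDual X], Heart t X → Heart t (Xᘁ)) := by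
  have h1 : Heart t (𝟙_ C) := one_mem_heart hC ht d hd h0 hred
  have L1 : ∀ (X : C) [HasLeftDual X], t.le 0 X → t.ge 0 (ᘁX) := by
    intro X _ hX
    apply ge_of_hom_zero d
    intro W hW f
    set e := tensorLeftHomEquiv W (ᘁX) X (𝟙_ C)
    have hz : ∀ g : X ⊗ W ⟶ 𝟙_ C, g = 0 := fun g =>
      homZero (show (-1:ℤ) < 0 by omega) (tensor_le_left h0 hX hW) h1.2 g
    have h2 : f ≫ (ρ_ (ᘁX)).inv = (0 : W ⟶ (ᘁX)) ≫ (ρ_ (ᘁX)).inv := by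
      have ha := e.apply_symm_apply (f ≫ (ρ_ (ᘁX)).inv)
      have hb := e.apply_symm_apply ((0 : W ⟶ (ᘁX)) ≫ (ρ_ (ᘁX)).inv)
      rw [← ha, ← hb, hz (e.symm _), hz (e.symm _)]
    exact (cancel_mono (ρ_ (ᘁX)).inv).1 h2
  have L2 : ∀ (X : C) [HasLeftDual X], t.ge 0 X → t.le 0 (ᘁX) := by
    intro X _ hX
    apply le_of_hom_zero d
    intro W hW f
    set e := tensorRightHomEquiv (𝟙_ C) (ᘁX) X W
    have hz : ∀ g : 𝟙_ C ⟶ W ⊗ X, g = 0 := fun g =>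
      homZero (show (0:ℤ) < 1 by omega) h1.1 (tensor_ge_right h0 hW hX) g
    have h2 : (λ_ (ᘁX)).hom ≫ f = (λ_ (ᘁX)).hom ≫ (0 : (ᘁX) ⟶ W) :=
      e.injective ((hz _).trans (hz _).symm)
    exact (cancel_epi (λ_ (ᘁX)).hom).1 h2
  have R1 : ∀ (X : C) [HasRightDual X], t.le 0 X → t.ge 0 (Xᘁ) := by
    intro X _ hX
    apply ge_of_hom_zero d
    intro W hW f
    set e := tensorRightHomEquiv W X (Xᘁ) (𝟙_ C)
    have hz : ∀ g : W ⊗ X ⟶ 𝟙_ C, g = 0 := fun g =>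
      homZero (show (-1:ℤ) < 0 by omega) (tensor_le_right h0 hW hX) h1.2 g
    have h2 : f ≫ (λ_ (Xᘁ)).inv = (0 : W ⟶ Xᘁ) ≫ (λ_ (Xᘁ)).inv := by
      have ha := e.apply_symm_apply (f ≫ (λ_ (Xᘁ)).inv)
      have hb := e.apply_symm_apply ((0 : W ⟶ Xᘁ) ≫ (λ_ (Xᘁ)).inv)
      rw [← ha, ← hb, hz (e.symm _), hz (e.symm _)]
    exact (cancel_mono (λ_ (Xᘁ)).inv).1 h2
  have R2 : ∀ (X : C) [HasRightDual X], t.ge 0 X → t.le 0 (Xᘁ) := by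
    intro X _ hX
    apply le_of_hom_zero d
    intro W hW f
    set e := tensorLeftHomEquiv (𝟙_ C) X (Xᘁ) W
    have hz : ∀ g : 𝟙_ C ⟶ X ⊗ W, g = 0 := fun g =>
      homZero (show (0:ℤ) < 1 by omega) h1.1 (tensor_ge_left h0 hX hW) g
    have h2 : (ρ_ (Xᘁ)).hom ≫ f = (ρ_ (Xᘁ)).hom ≫ (0 : Xᘁ ⟶ W) :=
      e.injective ((hz _).trans (hz _).symm)
    exact (cancel_epi (ρ_ (Xᘁ)).hom).1 h2
  exact ⟨L1, L2, fun X _ hX => ⟨L2 X hX.2, L1 X hX.1⟩,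
    R1, R2, fun X _ hX => ⟨R2 X hX.2, R1 X hX.1⟩⟩

end Paper
end
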